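/- arXiv:1004.1430 — 2 statements merged into one kernel-verified Lean document; each statement's English description precedes it below -/
import Mathlib

section
/- Let a > b be integers and k an integer. In the hexagonal grid, the distance from the vertex (k,a) to the horizontal line L_b = {(x,b) : x ∈ ℤ} equals 2(a−b) if a+k is even, and 2(a−b)−1 if a+k is odd. -/
/-- The hexagonal grid in its brick wall representation: vertex set ℤ×ℤ,
with (x,y) adjacent to (x±1,y) always, and to (x,y+1) if x+y is even
(equivalently, to (x,y-1) if x+y is odd). -/
def hexGraph : SimpleGraph (ℤ × ℤ) where
  Adj u v := (u.2 = v.2 ∧ (u.1 = v.1 + 1 ∨ v.1 = u.1 + 1)) ∨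
    (u.1 = v.1 ∧ ((v.2 = u.2 + 1 ∧ Even (u.1 + u.2)) ∨ (u.2 = v.2 + 1 ∧ Even (v.1 + v.2))))
  symm := by
    constructor
    rintro u v (⟨h1, h2 | h2⟩ | ⟨h1, ⟨h2, h3⟩ | ⟨h2, h3⟩⟩)
    · exact Or.inl ⟨h1.symm, Or.inr h2⟩
    · exact Or.inl ⟨h1.symm, Or.inl h2⟩
    · exact Or.inr ⟨h1.symm, Or.inr ⟨h2, h3⟩⟩
    · exact Or.inr ⟨h1.symm, Or.inl ⟨h2, h3⟩⟩
  loopless := by constructor; rintro ⟨x, y⟩ (⟨_, h | h⟩ | ⟨_, ⟨h, _⟩ | ⟨h, _⟩⟩) <;> omega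

/-- The graph distance from a vertex to the horizontal line L_k = {(x,k) : x ∈ ℤ}. -/
noncomputable def hexLineDist (u : ℤ × ℤ) (k : ℤ) : ℕ :=
  sInf {n : ℕ | ∃ x : ℤ, hexGraph.dist u (x, k) = n}

/-- Potential function: lower bound on distance to line y = b. -/
def hexPot (b : ℤ) (u : ℤ × ℤ) : ℤ :=
  max 0 (2 * (u.2 - b) - (if Even (u.1 + u.2) then 0 else 1))

lemma hexPot_lipschitz (b : ℤ) {u v : ℤ × ℤ} (h : hexGraph.Adj u v) :
    hexPot b u ≤ hexPot b v + 1 := by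
  obtain ⟨x, y⟩ := u
  obtain ⟨x', y'⟩ := v
  unfold hexPot
  rcases h with ⟨h1, h2 | h2⟩ | ⟨h1, ⟨h2, h3⟩ | ⟨h2, h3⟩⟩ <;>
    dsimp only at * <;> simp only [Int.even_iff] at * <;> split_ifs <;> omega

lemma hexPot_walk (b : ℤ) {u v : ℤ × ℤ} (p : hexGraph.Walk u v) :
    hexPot b u ≤ hexPot b v + p.length := by
  induction p with
  | nil => simp
  | cons h p ih =>
    have := hexPot_lipschitz b h
    simp only [SimpleGraph.Walk.length_cons]
    push_cast
    omega

lemma adj_right (x y : ℤ) : hexGraph.Adj (x, y) (x + 1, y) := by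
  exact Or.inl ⟨rfl, Or.inr rfl⟩

lemma adj_down (x y : ℤ) (h : ¬ Even (x + y)) : hexGraph.Adj (x, y) (x, y - 1) := by
  refine Or.inr ⟨rfl, Or.inr ⟨by ring, ?_⟩⟩
  simp only [Int.even_iff] at *
  omega

/-- Upper-bound walk construction. -/
lemma walk_down (b : ℤ) : ∀ (n : ℕ) (x y : ℤ), y = b + n →
    ∃ x' : ℤ, ∃ p : hexGraph.Walk (x, y) (x', b), (p.length : ℤ) ≤ hexPot b (x, y) := by
  intro n
  induction n with
  | zero =>
    intro x y hy
    have hyb : y = b := by push_cast at hy; omega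
    subst hyb
    exact ⟨x, SimpleGraph.Walk.nil, by simp [hexPot]⟩
  | succ n ih =>
    intro x y hy
    by_cases hpar : Even (x + y)
    · have h1 : hexGraph.Adj (x, y) (x + 1, y) := adj_right x y
      have hpar2 : ¬ Even ((x + 1) + y) := by
        simp only [Int.even_iff] at *; omega
      have h2 : hexGraph.Adj (x + 1, y) (x + 1, y - 1) := adj_down _ _ hpar2
      obtain ⟨x', p, hp⟩ := ih (x + 1) (y - 1) (by push_cast; omega)
      refine ⟨x', SimpleGraph.Walk.cons h1 (SimpleGraph.Walk.cons h2 p), ?_⟩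
      have hpot1 : hexPot b (x + 1, y - 1) = max 0 (2 * (y - 1 - b)) := by
        have he : Even (x + 1 + (y - 1)) := by simp only [Int.even_iff] at *; omega
        unfold hexPot
        dsimp only
        rw [if_pos he]
        omega
      have hpot2 : hexPot b (x, y) = 2 * (y - b) := by
        unfold hexPot
        simp only [hpar, if_pos]
        have : (n : ℤ) ≥ 0 := Int.natCast_nonneg n
        omega
      simp only [SimpleGraph.Walk.length_cons]
      have : (n : ℤ) ≥ 0 := Int.natCast_nonneg n
      push_cast
      rw [hpot1] at hp
      omega
    · have h2 : hexGraph.Adj (x, y) (x, y - 1) := adj_down _ _ hpar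
      obtain ⟨x', p, hp⟩ := ih x (y - 1) (by push_cast; omega)
      refine ⟨x', SimpleGraph.Walk.cons h2 p, ?_⟩
      have hpot1 : hexPot b (x, y - 1) = max 0 (2 * (y - 1 - b)) := by
        have he : Even (x + (y - 1)) := by simp only [Int.even_iff] at *; omega
        unfold hexPot
        dsimp only
        rw [if_pos he]
        omega
      have hpot2 : hexPot b (x, y) = 2 * (y - b) - 1 := by
        unfold hexPot
        simp only [hpar, if_neg, ite_false]
        have : (n : ℤ) ≥ 0 := Int.natCast_nonneg n
        omega
      simp only [SimpleGraph.Walk.length_cons]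
      have : (n : ℤ) ≥ 0 := Int.natCast_nonneg n
      push_cast
      rw [hpot1] at hp
      omega

lemma reach_horiz (y : ℤ) (x x' : ℤ) : hexGraph.Reachable (x, y) (x', y) := by
  have key : ∀ t : ℤ, hexGraph.Reachable (0, y) (t, y) := by
    intro t
    induction t using Int.induction_on with
    | zero => exact SimpleGraph.Reachable.refl _
    | succ n ih => exact ih.trans (adj_right n y).reachable
    | pred n ih =>
      refine ih.trans ?_
      have := (adj_right (-(n:ℤ) - 1) y).reachable.symm
      simpa using this
  exact (key x).symm.trans (key x')

/-- distance from (k,a) down to the line L_b for a > b. -/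
theorem hex_vertex_line_dist_down (a b k : ℤ) (hab : a > b) :
    (hexLineDist (k, a) b : ℤ) = if Even (a + k) then 2 * (a - b) else 2 * (a - b) - 1 := by
  set N : ℤ := if Even (a + k) then 2 * (a - b) else 2 * (a - b) - 1 with hN
  have hpotka : hexPot b (k, a) = N := by
    unfold hexPot
    have hcomm : Even (k + a) ↔ Even (a + k) := by rw [Int.add_comm]
    simp only [hN]
    rcases em (Even (a + k)) with h | h <;>
      simp [hcomm, h] <;> omega
  -- upper bound walk
  obtain ⟨x', p, hp⟩ := walk_down b (a - b).toNat k a (by omega)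
  rw [hpotka] at hp
  -- lower bound for every x
  have hlb : ∀ x : ℤ, N ≤ (hexGraph.dist (k, a) (x, b) : ℤ) := by
    intro x
    have hreach : hexGraph.Reachable (k, a) (x, b) :=
      p.reachable.trans (reach_horiz b x' x)
    obtain ⟨q, hq⟩ := hreach.exists_walk_length_eq_dist
    have := hexPot_walk b q
    rw [hpotka, hq] at this
    have hpotxb : hexPot b (x, b) ≤ 0 := by
      unfold hexPot
      split_ifs <;> simp <;> omega
    omega
  -- dist to x' equals N
  have hub : (hexGraph.dist (k, a) (x', b) : ℤ) ≤ N := by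
    have := SimpleGraph.dist_le p
    calc (hexGraph.dist (k, a) (x', b) : ℤ) ≤ (p.length : ℤ) := by exact_mod_cast this
      _ ≤ N := hp
  have heq : (hexGraph.dist (k, a) (x', b) : ℤ) = N := le_antisymm hub (hlb x')
  unfold hexLineDist
  have hmem : hexGraph.dist (k, a) (x', b) ∈ {n : ℕ | ∃ x : ℤ, hexGraph.dist (k, a) (x, b) = n} :=
    ⟨x', rfl⟩
  have hsinf : sInf {n : ℕ | ∃ x : ℤ, hexGraph.dist (k, a) (x, b) = n}
      = hexGraph.dist (k, a) (x', b) := by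
    refine le_antisymm (Nat.sInf_le hmem) (le_csInf ⟨_, hmem⟩ ?_)
    rintro n ⟨x, rfl⟩
    have := hlb x
    omega
  rw [hsinf, heq]
end

section
/- Let k be a positive integer and (x,y) a vertex of the hexagonal grid with x+y even. Then there exist paths of length exactly 2k+1 from (x,y) to every vertex in {(x−k+2j, y+k+1) : j=0,…,k} and to every vertex in {(x−k−1+2j, y−k) : j=0,…,k+1}. -/
lemma hex_adj_right (a b : ℤ) : hexGraph.Adj (a, b) (a + 1, b) :=
  Or.inl ⟨rfl, Or.inr rfl⟩

lemma hex_adj_left (a b : ℤ) : hexGraph.Adj (a, b) (a - 1, b) :=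
  Or.inl ⟨rfl, Or.inl (by ring)⟩

lemma hex_adj_up (a b : ℤ) (h : Even (a + b)) : hexGraph.Adj (a, b) (a, b + 1) :=
  Or.inr ⟨rfl, Or.inl ⟨rfl, h⟩⟩

lemma hex_adj_down (a b : ℤ) (h : Odd (a + b)) : hexGraph.Adj (a, b) (a, b - 1) :=
  Or.inr ⟨rfl, Or.inr ⟨by ring, by
    simp only [Int.even_iff, Int.odd_iff] at *; omega⟩⟩

lemma hex_up_walk : ∀ (m j : ℕ) (a b : ℤ), j ≤ m → Odd (a + b) →
    ∃ p : hexGraph.Walk (a, b) (a + 2 * j - m, b + m), p.length = 2 * m := by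
  intro m
  induction m with
  | zero =>
    intro j a b hj _
    interval_cases j
    exact ⟨SimpleGraph.Walk.nil.copy rfl (by simp), by simp⟩
  | succ m ih =>
    intro j a b hj hodd
    have hev : Even (a + b + 1) := by
      simp only [Int.even_iff, Int.odd_iff] at *; omega
    rcases Nat.eq_zero_or_pos j with rfl | hj0
    · have h1 := hex_adj_left a b
      have h2 : hexGraph.Adj (a - 1, b) (a - 1, b + 1) :=
        hex_adj_up _ _ (by simp only [Int.even_iff, Int.odd_iff] at *; omega)
      obtain ⟨p, hp⟩ := ih 0 (a - 1) (b + 1) (Nat.zero_le _)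
        (by simp only [Int.even_iff, Int.odd_iff] at *; omega)
      refine ⟨(SimpleGraph.Walk.cons h1 (SimpleGraph.Walk.cons h2 p)).copy rfl ?_, ?_⟩
      · push_cast
        exact Prod.ext (by ring) (by ring)
      · simp [hp]; omega
    · obtain ⟨j', rfl⟩ : ∃ j', j = j' + 1 := ⟨j - 1, by omega⟩
      have h1 := hex_adj_right a b
      have h2 : hexGraph.Adj (a + 1, b) (a + 1, b + 1) :=
        hex_adj_up _ _ (by simp only [Int.even_iff, Int.odd_iff] at *; omega)
      obtain ⟨p, hp⟩ := ih j' (a + 1) (b + 1) (by omega)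
        (by simp only [Int.even_iff, Int.odd_iff] at *; omega)
      refine ⟨(SimpleGraph.Walk.cons h1 (SimpleGraph.Walk.cons h2 p)).copy rfl ?_, ?_⟩
      · push_cast
        exact Prod.ext (by ring) (by ring)
      · simp [hp]; omega

lemma hex_down_walk : ∀ (m j : ℕ) (a b : ℤ), j ≤ m → Even (a + b) →
    ∃ p : hexGraph.Walk (a, b) (a + 2 * j - m, b - m), p.length = 2 * m := by
  intro m
  induction m with
  | zero =>
    intro j a b hj _
    interval_cases j
    exact ⟨SimpleGraph.Walk.nil.copy rfl (by simp), by simp⟩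
  | succ m ih =>
    intro j a b hj hev
    have hodd1 : Odd (a - 1 + b) := by
      simp only [Int.even_iff, Int.odd_iff] at *; omega
    have hodd2 : Odd (a + 1 + b) := by
      simp only [Int.even_iff, Int.odd_iff] at *; omega
    rcases Nat.eq_zero_or_pos j with rfl | hj0
    · have h1 := hex_adj_left a b
      have h2 : hexGraph.Adj (a - 1, b) (a - 1, b - 1) := hex_adj_down _ _ hodd1
      obtain ⟨p, hp⟩ := ih 0 (a - 1) (b - 1) (Nat.zero_le _)
        (by simp only [Int.even_iff, Int.odd_iff] at *; omega)
      refine ⟨(SimpleGraph.Walk.cons h1 (SimpleGraph.Walk.cons h2 p)).copy rfl ?_, ?_⟩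
      · push_cast
        exact Prod.ext (by ring) (by ring)
      · simp [hp]; omega
    · obtain ⟨j', rfl⟩ : ∃ j', j = j' + 1 := ⟨j - 1, by omega⟩
      have h1 := hex_adj_right a b
      have h2 : hexGraph.Adj (a + 1, b) (a + 1, b - 1) := hex_adj_down _ _ hodd2
      obtain ⟨p, hp⟩ := ih j' (a + 1) (b - 1) (by omega)
        (by simp only [Int.even_iff, Int.odd_iff] at *; omega)
      refine ⟨(SimpleGraph.Walk.cons h1 (SimpleGraph.Walk.cons h2 p)).copy rfl ?_, ?_⟩
      · push_cast
        exact Prod.ext (by ring) (by ring)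
      · simp [hp]; omega

/-- for x+y even, paths of length exactly 2k+1 from (x,y) to
(x−k+2j, y+k+1) for 0 ≤ j ≤ k, and to (x−k−1+2j, y−k) for 0 ≤ j ≤ k+1. -/
theorem hex_odd_paths_even_vertex (k : ℕ) (hk : 0 < k) (x y : ℤ) (hxy : Even (x + y)) :
    (∀ j : ℕ, j ≤ k →
      ∃ p : hexGraph.Walk (x, y) (x - k + 2 * j, y + k + 1), p.length = 2 * k + 1) ∧
    (∀ j : ℕ, j ≤ k + 1 →
      ∃ p : hexGraph.Walk (x, y) (x - k - 1 + 2 * j, y - k), p.length = 2 * k + 1) := by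
  constructor
  · intro j hj
    have h1 : hexGraph.Adj (x, y) (x, y + 1) := hex_adj_up _ _ hxy
    obtain ⟨p, hp⟩ := hex_up_walk k j x (y + 1) hj
      (by simp only [Int.even_iff, Int.odd_iff] at *; omega)
    refine ⟨(SimpleGraph.Walk.cons h1 p).copy rfl ?_, ?_⟩
    · exact Prod.ext (by push_cast; ring) (by push_cast; ring)
    · simp [hp]
  · intro j hj
    rcases le_or_gt j k with hjk | hjk
    · obtain ⟨p, hp⟩ := hex_down_walk k j x y hjk hxy
      have h1 : hexGraph.Adj ((x + 2 * j - k : ℤ), (y - k : ℤ))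
          ((x + 2 * j - k) - 1, (y - k : ℤ)) := hex_adj_left _ _
      refine ⟨(p.concat h1).copy rfl ?_, ?_⟩
      · exact Prod.ext (by push_cast; ring) (by push_cast; ring)
      · simp [SimpleGraph.Walk.length_concat, hp]
    · have hjk' : j = k + 1 := by omega
      obtain ⟨p, hp⟩ := hex_down_walk k k x y le_rfl hxy
      have h1 : hexGraph.Adj ((x + 2 * k - k : ℤ), (y - k : ℤ))
          ((x + 2 * k - k) + 1, (y - k : ℤ)) := hex_adj_right _ _
      refine ⟨(p.concat h1).copy rfl ?_, ?_⟩
      · exact Prod.ext (by push_cast; simp [hjk']; ring) (by push_cast; ring)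
      · simp [SimpleGraph.Walk.length_concat, hp]
end
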